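/- Let (B,⌊·,·⌋,‖·‖) be an SSDB space and g₀ := ½‖·‖². Then: (a) if f ∈ PC(B) is a BC-function then P_q(f) is maximally q-positive and P_q(f^@) = P_q(f); (b) a q-positive subset A of B is maximally q-positive if and only if A − N_q(g₀) = B. -/

import Mathlib

open scoped Pointwise

noncomputable section

variable {B : Type*} [NormedAddCommGroup B] [NormedSpace ℝ B]

/-- The quadratic form `q(b) = ½⌊b,b⌋` associated with a bilinear form. -/
def qForm (br : B →ₗ[ℝ] B →ₗ[ℝ] ℝ) (b : B) : ℝ := (1 / 2) * br b b

/-- The intrinsic conjugate `f^@(c) = sup_{b} (⌊b,c⌋ - f(b))`. -/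
def intrinsicConj (br : B →ₗ[ℝ] B →ₗ[ℝ] ℝ) (f : B → EReal) (c : B) : EReal :=
  ⨆ b : B, ((br b c : ℝ) : EReal) - f b

/-- A proper function from `B` into `(-∞,∞]`: never `⊥` and somewhere finite. -/
def ProperFn (f : B → EReal) : Prop := (∀ b, f b ≠ ⊥) ∧ ∃ b, f b ≠ ⊤

/-- Convexity for `(-∞,∞]`-valued functions. -/
def ConvexFn (f : B → EReal) : Prop :=
  ∀ b c : B, ∀ t : ℝ, 0 ≤ t → t ≤ 1 →
    f (t • b + (1 - t) • c) ≤ (t : EReal) * f b + ((1 - t : ℝ) : EReal) * f c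

/-- `A` is q-positive: nonempty and `q(b - c) ≥ 0` for all `b, c ∈ A`. -/
def QPos (br : B →ₗ[ℝ] B →ₗ[ℝ] ℝ) (A : Set B) : Prop :=
  A.Nonempty ∧ ∀ b ∈ A, ∀ c ∈ A, 0 ≤ qForm br (b - c)

/-- `A` is maximally q-positive. -/
def MaxQPos (br : B →ₗ[ℝ] B →ₗ[ℝ] ℝ) (A : Set B) : Prop :=
  QPos br A ∧ ∀ C : Set B, QPos br C → A ⊆ C → C = A

/-- `P_q(f) = {b : f(b) = q(b)}`. -/
def Pq (br : B →ₗ[ℝ] B →ₗ[ℝ] ℝ) (f : B → EReal) : Set B :=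
  {b : B | f b = ((qForm br b : ℝ) : EReal)}

/-- `N_q(g) = {b : g(b) = -q(b)}`. -/
def Nq (br : B →ₗ[ℝ] B →ₗ[ℝ] ℝ) (f : B → EReal) : Set B :=
  {b : B | f b = ((-(qForm br b) : ℝ) : EReal)}

/-- `f` is a BC-function: `f^@(b) ≥ f(b) ≥ q(b)` for all `b`. -/
def IsBC (br : B →ₗ[ℝ] B →ₗ[ℝ] ℝ) (f : B → EReal) : Prop :=
  ∀ b : B, ((qForm br b : ℝ) : EReal) ≤ f b ∧ f b ≤ intrinsicConj br f b

/-- `g` is a TBC-function: `g^@(-b) ≥ g(b) ≥ -q(b)` for all `b`. -/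
def IsTBC (br : B →ₗ[ℝ] B →ₗ[ℝ] ℝ) (g : B → EReal) : Prop :=
  ∀ b : B, ((-(qForm br b) : ℝ) : EReal) ≤ g b ∧ g b ≤ intrinsicConj br g (-b)

/-- The effective domain `dom f = {b : f(b) ∈ ℝ}`. -/
def domE (f : B → EReal) : Set B := {b : B | ∃ r : ℝ, f b = (r : EReal)}

/-- `(B, ⌊·,·⌋, ‖·‖)` is an SSDB space: there is a surjective linear isometry
`ι : B → B*` with `⟨b, ι(c)⟩ = ⌊b,c⌋` for all `b, c`. -/
def IsSSDB (br : B →ₗ[ℝ] B →ₗ[ℝ] ℝ) : Prop :=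
  ∃ ι : B ≃ₗᵢ[ℝ] StrongDual ℝ B, ∀ b c : B, ι c b = br b c


lemma ereal_coe_sub_top (r : ℝ) : (r : EReal) - (⊤:EReal) = ⊥ := rfl
lemma ereal_fin_or_top (x : EReal) (hbot : x ≠ ⊥) : (∃ t : ℝ, x = (t:EReal)) ∨ x = ⊤ := by
  induction x using EReal.rec with
  | bot => exact absurd rfl hbot
  | coe t => exact Or.inl ⟨t, rfl⟩
  | top => exact Or.inr rfl
lemma ereal_ne_bot_of_coe_le {x : EReal} {r : ℝ} (h : (r:EReal) ≤ x) : x ≠ ⊥ := by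
  intro hx; rw [hx, le_bot_iff] at h; exact EReal.coe_ne_bot r h
lemma ereal_add_coe_neg (x : EReal) (r : ℝ) : x + (r : EReal) + ((-r : ℝ) : EReal) = x := by
  induction x using EReal.rec with
  | bot => simp
  | coe t => norm_cast; ring
  | top => rw [EReal.top_add_coe, EReal.top_add_coe]
section q
variable (br : B →ₗ[ℝ] B →ₗ[ℝ] ℝ)
lemma qForm_add (hsymm : ∀ b c : B, br b c = br c b) (b c : B) :
    qForm br (b + c) = qForm br b + br b c + qForm br c := by
  simp [qForm, map_add, hsymm c b]; ring
lemma qForm_sub (hsymm : ∀ b c : B, br b c = br c b) (b c : B) :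
    qForm br (b - c) = qForm br b - br b c + qForm br c := by
  simp [qForm, map_sub, hsymm c b]; ring
lemma qForm_neg (b : B) : qForm br (-b) = qForm br b := by simp [qForm]
lemma qForm_smul (t : ℝ) (b : B) : qForm br (t • b) = t ^ 2 * qForm br b := by
  simp [qForm, map_smul]; ring
lemma qForm_zero : qForm br 0 = 0 := by simp [qForm]
lemma br_abs_le {ι : B ≃ₗᵢ[ℝ] StrongDual ℝ B} (hι : ∀ b c : B, ι c b = br b c)
    (b c : B) : |br b c| ≤ ‖b‖ * ‖c‖ := by
  have h1 : ‖(ι c) b‖ ≤ ‖ι c‖ * ‖b‖ := (ι c).le_opNorm b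
  rw [hι b c, ι.norm_map] at h1
  simpa [Real.norm_eq_abs, mul_comm] using h1
lemma abs_qForm_le {ι : B ≃ₗᵢ[ℝ] StrongDual ℝ B} (hι : ∀ b c : B, ι c b = br b c)
    (b : B) : |qForm br b| ≤ 1/2 * ‖b‖^2 := by
  have := br_abs_le br hι b b
  rw [qForm, abs_mul]
  rw [← sq] at this
  calc |(1:ℝ)/2| * |br b b| ≤ 1/2 * ‖b‖^2 := by
        rw [abs_of_pos (by norm_num : (0:ℝ) < 1/2)]
        nlinarith [abs_nonneg (br b b)]
end q

set_option maxHeartbeats 2000000 in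
lemma mainLemma (br : B →ₗ[ℝ] B →ₗ[ℝ] ℝ) (hsymm : ∀ b c : B, br b c = br c b)
    (hssdb : IsSSDB br) (f : B → EReal) (hproper : ∃ b, f b ≠ ⊤) (hconv : ConvexFn f)
    (hq : ∀ b, ((qForm br b : ℝ) : EReal) ≤ f b)
    (hself : ∀ b, f b ≤ intrinsicConj br f b) :
    ∃ c₀ : B, f c₀ = ((qForm br c₀ : ℝ) : EReal) ∧
      qForm br c₀ = -((1/2) * ‖c₀‖^2) := by
  obtain ⟨ι, hι⟩ := hssdb
  have hfne : ∀ b, f b ≠ ⊥ := fun b => ereal_ne_bot_of_coe_le (hq b)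
  obtain ⟨b₀, hb₀⟩ := hproper
  obtain ⟨t₀, ht₀⟩ : ∃ t : ℝ, f b₀ = (t : EReal) :=
    ⟨(f b₀).toReal, (EReal.coe_toReal hb₀ (hfne b₀)).symm⟩
  -- real lower bounds from f ≥ q
  have hql : ∀ (y : B) (t : ℝ), f y = (t:EReal) → qForm br y ≤ t := by
    intro y t hyt
    have := hq y; rw [hyt] at this; exact_mod_cast this
  -- the inf-convolution h
  set S : B → Set ℝ :=
    fun x => {r | ∃ (y : B) (t : ℝ), f y = (t:EReal) ∧ r = t + 1/2 * ‖x - y‖^2} with hSdef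
  have hSne : ∀ x, (S x).Nonempty := fun x => ⟨t₀ + 1/2 * ‖x - b₀‖^2, b₀, t₀, ht₀, rfl⟩
  have hmemS : ∀ (x y : B) (t : ℝ), f y = (t:EReal) → t + 1/2 * ‖x - y‖^2 ∈ S x :=
    fun x y t hyt => ⟨y, t, hyt, rfl⟩
  -- midpoint convexity bound
  have hmid : ∀ (x y : B) (t : ℝ), f y = (t:EReal) →
      -(t₀ + 1/2 * ‖x + b₀‖^2) ≤ t + 1/2 * ‖x - y‖^2 := by
    intro x y t hyt
    have hcv := hconv y b₀ (1/2) (by norm_num) (by norm_num)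
    rw [hyt, ht₀] at hcv
    norm_num at hcv
    have hcv2 : f ((1/2:ℝ) • y + (1/2:ℝ) • b₀) ≤ (((t + t₀)/2 : ℝ) : EReal) := by
      have : ((1/2 : ℝ):EReal) * (t:EReal) + ((1/2 : ℝ):EReal) * (t₀:EReal)
          = (((t + t₀)/2 : ℝ) : EReal) := by norm_cast; ring
      rw [← this]
      convert hcv using 3 <;> norm_num
    set z := (1/2:ℝ) • y + (1/2:ℝ) • b₀ with hz
    have hqz : qForm br z ≤ (t + t₀)/2 := by
      have h1 := (hq z).trans hcv2
      exact_mod_cast h1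
    have habs := abs_qForm_le br hι z
    have hzn : ‖z‖ = 1/2 * ‖y + b₀‖ := by
      rw [hz, ← smul_add, norm_smul, Real.norm_eq_abs]
      norm_num
    have htri : ‖y + b₀‖ ≤ ‖x - y‖ + ‖x + b₀‖ := by
      calc ‖y + b₀‖ = ‖(y - x) + (x + b₀)‖ := by congr 1; abel
        _ ≤ ‖y - x‖ + ‖x + b₀‖ := norm_add_le _ _
        _ = ‖x - y‖ + ‖x + b₀‖ := by rw [norm_sub_rev]
    have h2 : -(1/2 * ‖z‖^2) ≤ qForm br z := by
      have := abs_le.1 habs; linarith [this.1]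
    rw [hzn] at h2
    nlinarith [norm_nonneg (x - y), norm_nonneg (x + b₀), norm_nonneg (y + b₀),
      sq_nonneg (‖x - y‖ - ‖x + b₀‖), sq_nonneg (‖x-y‖ + ‖x + b₀‖ - ‖y + b₀‖)]
  have hSbdd : ∀ x, BddBelow (S x) := by
    intro x
    refine ⟨-(t₀ + 1/2 * ‖x + b₀‖^2), ?_⟩
    rintro r ⟨y, t, hyt, rfl⟩
    exact hmid x y t hyt
  set h : B → ℝ := fun x => sInf (S x) with hhdef
  have hle : ∀ (x y : B) (t : ℝ), f y = (t:EReal) → h x ≤ t + 1/2 * ‖x - y‖^2 :=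
    fun x y t hyt => csInf_le (hSbdd x) (hmemS x y t hyt)
  have hge0 : 0 ≤ h 0 := by
    apply le_csInf (hSne 0)
    rintro r ⟨y, t, hyt, rfl⟩
    have h1 := hql y t hyt
    have h2 := abs_qForm_le br hι y
    have := abs_le.1 h2
    have hn : ‖(0:B) - y‖ = ‖y‖ := by rw [zero_sub, norm_neg]
    rw [hn]; linarith [this.1]
  -- convexity of h
  have hhconv : ∀ (x₁ x₂ : B) (t : ℝ), 0 ≤ t → t ≤ 1 →
      h (t • x₁ + (1 - t) • x₂) ≤ t * h x₁ + (1 - t) * h x₂ := by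
    intro x₁ x₂ t ht0 ht1
    refine le_of_forall_pos_le_add ?_
    intro ε hε
    obtain ⟨r₁, hr₁S, hr₁⟩ : ∃ r ∈ S x₁, r < h x₁ + ε/2 := by
      apply (csInf_lt_iff (hSbdd x₁) (hSne x₁)).1
      linarith [lt_add_of_pos_right (h x₁) (half_pos hε)]
    obtain ⟨r₂, hr₂S, hr₂⟩ : ∃ r ∈ S x₂, r < h x₂ + ε/2 := by
      apply (csInf_lt_iff (hSbdd x₂) (hSne x₂)).1
      linarith [lt_add_of_pos_right (h x₂) (half_pos hε)]
    obtain ⟨y₁, s₁, hy₁, rfl⟩ := hr₁S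
    obtain ⟨y₂, s₂, hy₂, rfl⟩ := hr₂S
    set y := t • y₁ + (1 - t) • y₂ with hy
    have hcv := hconv y₁ y₂ t ht0 ht1
    rw [hy₁, hy₂] at hcv
    have hcoe : (t : EReal) * (s₁:EReal) + ((1 - t : ℝ):EReal) * (s₂:EReal)
        = ((t * s₁ + (1 - t) * s₂ : ℝ) : EReal) := by norm_cast
    rw [hcoe] at hcv
    have hytop : f y ≠ ⊤ := ne_top_of_le_ne_top (EReal.coe_ne_top _) hcv
    set s := (f y).toReal with hs
    have hfy : f y = (s : EReal) := (EReal.coe_toReal hytop (hfne y)).symm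
    have hsle : s ≤ t * s₁ + (1 - t) * s₂ := by
      rw [hfy] at hcv; exact_mod_cast hcv
    have hpt : (t • x₁ + (1 - t) • x₂) - y = t • (x₁ - y₁) + (1 - t) • (x₂ - y₂) := by
      rw [hy]; rw [smul_sub, smul_sub]; abel
    have hnle : ‖t • x₁ + (1 - t) • x₂ - y‖ ≤ t * ‖x₁ - y₁‖ + (1 - t) * ‖x₂ - y₂‖ := by
      rw [hpt]
      refine (norm_add_le _ _).trans ?_
      rw [norm_smul, norm_smul, Real.norm_eq_abs, Real.norm_eq_abs,
        abs_of_nonneg ht0, abs_of_nonneg (by linarith : (0:ℝ) ≤ 1 - t)]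
    have hsq : 1/2 * ‖t • x₁ + (1 - t) • x₂ - y‖^2 ≤
        t * (1/2 * ‖x₁ - y₁‖^2) + (1 - t) * (1/2 * ‖x₂ - y₂‖^2) := by
      nlinarith [norm_nonneg (t • x₁ + (1 - t) • x₂ - y), norm_nonneg (x₁ - y₁),
        norm_nonneg (x₂ - y₂), sq_nonneg (‖x₁ - y₁‖ - ‖x₂ - y₂‖),
        mul_nonneg ht0 (by linarith : (0:ℝ) ≤ 1 - t)]
    have hmain : h (t • x₁ + (1 - t) • x₂) ≤
        t * (s₁ + 1/2 * ‖x₁ - y₁‖^2) + (1 - t) * (s₂ + 1/2 * ‖x₂ - y₂‖^2) := by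
      refine (hle _ y s hfy).trans ?_
      nlinarith []
    refine hmain.trans ?_
    have e1 : t * (s₁ + 1/2 * ‖x₁ - y₁‖^2) ≤ t * (h x₁ + ε/2) :=
      mul_le_mul_of_nonneg_left hr₁.le ht0
    have e2 : (1 - t) * (s₂ + 1/2 * ‖x₂ - y₂‖^2) ≤ (1 - t) * (h x₂ + ε/2) :=
      mul_le_mul_of_nonneg_left hr₂.le (by linarith)
    nlinarith [e1, e2]
  -- difference quotients
  set Q : B → ℝ → ℝ := fun x t => (h (t • x) - h 0) / t with hQdef
  have hQmono : ∀ (x : B) {s t : ℝ}, 0 < s → s ≤ t → 0 < t → Q x s ≤ Q x t := by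
    intro x s t hs hst ht
    have hst' : s/t ≤ 1 := (div_le_one ht).2 hst
    have hst0 : 0 ≤ s/t := le_of_lt (div_pos hs ht)
    have hcv := hhconv (t • x) 0 (s/t) hst0 hst'
    have hpt : (s/t) • (t • x) + (1 - s/t) • (0:B) = s • x := by
      rw [smul_zero, add_zero, smul_smul, div_mul_cancel₀ _ (ne_of_gt ht)]
    rw [hpt] at hcv
    have h1 : t * h (s • x) ≤ t * ((s/t) * h (t • x) + (1 - s/t) * h 0) :=
      mul_le_mul_of_nonneg_left hcv (le_of_lt ht)
    have h2 : t * ((s/t) * h (t • x) + (1 - s/t) * h 0)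
        = s * h (t • x) + (t - s) * h 0 := by
      field_simp
    rw [h2] at h1
    show (h (s • x) - h 0) / s ≤ (h (t • x) - h 0) / t
    rw [div_le_div_iff₀ hs ht]
    nlinarith [h1]
  have hQmid : ∀ (x : B) (t : ℝ), 0 < t → -(Q (-x) t) ≤ Q x t := by
    intro x t ht
    have hcv := hhconv (t • x) (t • (-x)) (1/2) (by norm_num) (by norm_num)
    have hpt : (1/2 : ℝ) • (t • x) + (1 - 1/2 : ℝ) • (t • (-x)) = (0:B) := by module
    rw [hpt] at hcv
    show -((h (t • (-x)) - h 0) / t) ≤ (h (t • x) - h 0) / t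
    rw [← neg_div, div_le_div_iff₀ ht ht]
    nlinarith [hcv]
  have hQlb : ∀ (x : B) (t : ℝ), 0 < t → -(Q (-x) 1) ≤ Q x t := by
    intro x t ht
    rcases le_total t 1 with h1 | h1
    · have := hQmono (-x) ht h1 one_pos
      linarith [hQmid x t ht]
    · have := hQmono x one_pos h1 (by linarith)
      linarith [hQmid x 1 one_pos]
  set D : B → Set ℝ := fun x => {d | ∃ t : ℝ, 0 < t ∧ d = Q x t} with hDdef
  have hDne : ∀ x, (D x).Nonempty := fun x => ⟨Q x 1, 1, one_pos, rfl⟩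
  have hDbdd : ∀ x, BddBelow (D x) := by
    intro x
    refine ⟨-(Q (-x) 1), ?_⟩
    rintro d ⟨t, ht, rfl⟩
    exact hQlb x t ht
  set p : B → ℝ := fun x => sInf (D x) with hpdef
  have hpQ : ∀ (x : B) (t : ℝ), 0 < t → p x ≤ Q x t :=
    fun x t ht => csInf_le (hDbdd x) ⟨t, ht, rfl⟩
  have hple : ∀ x, p x ≤ h x - h 0 := by
    intro x
    have h1 := hpQ x 1 one_pos
    have h2 : Q x 1 = h x - h 0 := by
      show (h ((1:ℝ) • x) - h 0) / 1 = h x - h 0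
      rw [one_smul, div_one]
    rwa [h2] at h1
  have hphom : ∀ (c : ℝ), 0 < c → ∀ x, p (c • x) = c * p x := by
    intro c hc x
    have hQs : ∀ t : ℝ, 0 < t → Q (c • x) t = c * Q x (t * c) := by
      intro t ht
      show (h (t • (c • x)) - h 0) / t = c * ((h ((t * c) • x) - h 0) / (t * c))
      rw [smul_smul]
      have ht' := ne_of_gt ht
      have hc' := ne_of_gt hc
      field_simp
    have hset : D (c • x) = c • (D x) := by
      ext d
      constructor
      · rintro ⟨t, ht, rfl⟩
        refine ⟨Q x (t * c), ⟨t * c, mul_pos ht hc, rfl⟩, ?_⟩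
        show c • Q x (t * c) = Q (c • x) t
        rw [smul_eq_mul]
        exact (hQs t ht).symm
      · rintro ⟨d', ⟨t, ht, rfl⟩, rfl⟩
        refine ⟨t / c, div_pos ht hc, ?_⟩
        show c • Q x t = Q (c • x) (t / c)
        rw [smul_eq_mul, hQs (t / c) (div_pos ht hc), div_mul_cancel₀ _ (ne_of_gt hc)]
    show sInf (D (c • x)) = c * sInf (D x)
    rw [hset, Real.sInf_smul_of_nonneg (le_of_lt hc), smul_eq_mul]
  have hpadd : ∀ x y : B, p (x + y) ≤ p x + p y := by
    intro x y
    refine le_of_forall_pos_le_add ?_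
    intro ε hε
    obtain ⟨d₁, ⟨s, hs, rfl⟩, hd₁⟩ : ∃ d ∈ D x, d < p x + ε/2 := by
      apply (csInf_lt_iff (hDbdd x) (hDne x)).1
      linarith [lt_add_of_pos_right (p x) (half_pos hε)]
    obtain ⟨d₂, ⟨s', hs', rfl⟩, hd₂⟩ : ∃ d ∈ D y, d < p y + ε/2 := by
      apply (csInf_lt_iff (hDbdd y) (hDne y)).1
      linarith [lt_add_of_pos_right (p y) (half_pos hε)]
    set u := min s s' with hu
    have hu0 : 0 < u := lt_min hs hs'
    have hQxu : Q x u ≤ Q x s := hQmono x hu0 (min_le_left _ _) hs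
    have hQyu : Q y u ≤ Q y s' := hQmono y hu0 (min_le_right _ _) hs'
    have hkey : Q (x + y) (u/2) ≤ Q x u + Q y u := by
      have hcv := hhconv (u • x) (u • y) (1/2) (by norm_num) (by norm_num)
      have hpt : (1/2 : ℝ) • (u • x) + (1 - 1/2 : ℝ) • (u • y) = (u/2) • (x + y) := by
        module
      rw [hpt] at hcv
      show (h ((u/2) • (x + y)) - h 0) / (u/2) ≤
        (h (u • x) - h 0) / u + (h (u • y) - h 0) / u
      rw [div_le_iff₀ (half_pos hu0)]
      have expand : ((h (u • x) - h 0) / u + (h (u • y) - h 0) / u) * (u/2)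
          = (1/2) * (h (u • x) - h 0) + (1/2) * (h (u • y) - h 0) := by
        field_simp
      rw [expand]
      linarith [hcv]
    have := hpQ (x + y) (u/2) (half_pos hu0)
    linarith
  -- value of p at 0
  have hp0 : (0:ℝ) ≤ p 0 := by
    apply le_csInf (hDne 0)
    rintro d ⟨t, ht, rfl⟩
    show (0:ℝ) ≤ (h (t • (0:B)) - h 0) / t
    rw [smul_zero, sub_self, zero_div]
  -- Hahn-Banach extension
  obtain ⟨ψ, -, hψ⟩ :=
    exists_extension_of_le_sublinear ⟨⊥, 0⟩ p hphom hpadd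
      (fun x => by
        have hx : (x : B) = 0 := (Submodule.mem_bot ℝ).1 x.2
        show (0 : ↥(⊥ : Submodule ℝ B) →ₗ[ℝ] ℝ) x ≤ p x
        rw [LinearMap.zero_apply, hx]
        exact hp0)
  have hψh : ∀ x, ψ x ≤ h x - h 0 := fun x => (hψ x).trans (hple x)
  -- continuity of ψ
  have hK1 : ∀ x : B, ‖x‖ ≤ 1 → ψ x ≤ t₀ + 1/2 * (1 + ‖b₀‖)^2 - h 0 := by
    intro x hx
    have h1 := hψh x
    have h2 := hle x b₀ t₀ ht₀
    have h3 : ‖x - b₀‖ ≤ 1 + ‖b₀‖ := by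
      refine (norm_sub_le _ _).trans ?_
      linarith
    have h4 : ‖x - b₀‖^2 ≤ (1 + ‖b₀‖)^2 := by
      nlinarith [norm_nonneg (x - b₀), norm_nonneg b₀]
    linarith
  have hbound : ∀ x : B, ‖ψ x‖ ≤ (t₀ + 1/2 * (1 + ‖b₀‖)^2 - h 0) * ‖x‖ := by
    intro x
    rcases eq_or_ne x 0 with rfl | hx
    · simp
    · have hnx : (0:ℝ) < ‖x‖ := norm_pos_iff.2 hx
      set u := ‖x‖⁻¹ • x with hu
      have hun : ‖u‖ ≤ 1 := by
        rw [hu, norm_smul, Real.norm_eq_abs, abs_of_pos (inv_pos.2 hnx),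
          inv_mul_cancel₀ (ne_of_gt hnx)]
      have h1 : ψ u ≤ t₀ + 1/2 * (1 + ‖b₀‖)^2 - h 0 := hK1 u hun
      have h2 : ψ (-u) ≤ t₀ + 1/2 * (1 + ‖b₀‖)^2 - h 0 := by
        have : ‖-u‖ ≤ 1 := by rwa [norm_neg]
        exact hK1 (-u) this
      rw [map_neg] at h2
      have h3 : |ψ u| ≤ t₀ + 1/2 * (1 + ‖b₀‖)^2 - h 0 := abs_le.2 ⟨by linarith, h1⟩
      have h4 : ψ x = ‖x‖ * ψ u := by
        rw [hu, map_smul, smul_eq_mul, ← mul_assoc, mul_inv_cancel₀ (ne_of_gt hnx), one_mul]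
      rw [Real.norm_eq_abs, h4, abs_mul, abs_of_pos hnx, mul_comm]
      exact mul_le_mul_of_nonneg_right h3 (le_of_lt hnx)
  set Ψ : B →L[ℝ] ℝ := LinearMap.mkContinuous ψ (t₀ + 1/2 * (1 + ‖b₀‖)^2 - h 0) hbound
    with hΨ
  have hΨap : ∀ x, Ψ x = ψ x := fun x => rfl
  set c₀ : B := ι.symm Ψ with hc₀def
  have hbrc₀ : ∀ b, br b c₀ = ψ b := by
    intro b
    rw [← hι b c₀, hc₀def, ι.apply_symm_apply]
    exact hΨap b
  have hnc₀ : ‖c₀‖ = ‖Ψ‖ := ι.symm.norm_map Ψ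
  -- key estimate
  have hkey : ∀ (y : B) (t : ℝ), f y = (t:EReal) →
      br y c₀ - t ≤ -(h 0) - 1/2 * ‖c₀‖^2 := by
    intro y t hyt
    set C : ℝ := t - h 0 - ψ y with hC
    have hC0 : 0 ≤ C := by
      have h1 := hψh y
      have h2 := hle y y t hyt
      simp only [sub_self, norm_zero] at h2
      rw [hC]; nlinarith [h2]
    have hCu : ∀ u : B, ψ u ≤ 1/2 * ‖u‖^2 + C := by
      intro u
      have h1 := hψh (y + u)
      have h2 := hle (y + u) y t hyt
      have h3 : (y + u) - y = u := by abel
      rw [h3] at h2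
      have h4 : ψ (y + u) = ψ y + ψ u := map_add ψ y u
      rw [hC]; linarith
    have hrΨ : ∀ r : ℝ, 0 < r → ‖Ψ‖ ≤ r/2 + C/r := by
      intro r hr
      have hrC : 0 ≤ r/2 + C/r := by
        have := div_nonneg hC0 (le_of_lt hr)
        linarith
      refine ContinuousLinearMap.opNorm_le_bound Ψ hrC ?_
      intro x
      rcases eq_or_ne x 0 with rfl | hx
      · simp
      · have hnx : (0:ℝ) < ‖x‖ := norm_pos_iff.2 hx
        set u := (r/‖x‖) • x with hu
        have hun : ‖u‖ = r := by
          rw [hu, norm_smul, Real.norm_eq_abs, abs_of_pos (div_pos hr hnx),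
            div_mul_cancel₀ _ (ne_of_gt hnx)]
        have hu1 : ψ u ≤ 1/2 * r^2 + C := by
          have := hCu u; rw [hun] at this; exact this
        have hu2 : ψ (-u) ≤ 1/2 * r^2 + C := by
          have := hCu (-u); rw [norm_neg, hun] at this; exact this
        rw [map_neg] at hu2
        have hu3 : |ψ u| ≤ 1/2 * r^2 + C := abs_le.2 ⟨by linarith, hu1⟩
        have h4 : ψ u = (r/‖x‖) * ψ x := by rw [hu, map_smul, smul_eq_mul]
        have h5 : |ψ u| = (r/‖x‖) * |ψ x| := by
          rw [h4, abs_mul, abs_of_pos (div_pos hr hnx)]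
        have h6 : r * |ψ x| ≤ (1/2 * r^2 + C) * ‖x‖ := by
          have h7 : (r/‖x‖) * |ψ x| ≤ 1/2 * r^2 + C := by rw [← h5]; exact hu3
          calc r * |ψ x| = ((r/‖x‖) * |ψ x|) * ‖x‖ := by field_simp
            _ ≤ (1/2 * r^2 + C) * ‖x‖ := mul_le_mul_of_nonneg_right h7 (norm_nonneg x)
        have h8 : ‖Ψ x‖ = |ψ x| := by rw [hΨap, Real.norm_eq_abs]
        rw [h8]
        have h9a : (1/2 * r^2 + C) / r = r/2 + C/r := by
          have hr' : r ≠ 0 := ne_of_gt hr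
          field_simp
        have h9 : (1/2 * r^2 + C) * ‖x‖ / r = (r/2 + C/r) * ‖x‖ := by
          rw [mul_div_right_comm, h9a]
        rw [← h9]
        rw [le_div_iff₀ hr]
        linarith [h6]
    have hhalf : 1/2 * ‖Ψ‖^2 ≤ C := by
      rcases (norm_nonneg Ψ).eq_or_lt with heq | hpos
      · rw [← heq]; simpa using hC0
      · have h1 := hrΨ ‖Ψ‖ hpos
        have h2 : ‖Ψ‖ * ‖Ψ‖ ≤ (‖Ψ‖/2 + C/‖Ψ‖) * ‖Ψ‖ :=
          mul_le_mul_of_nonneg_right h1 (le_of_lt hpos)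
        have h3 : (‖Ψ‖/2 + C/‖Ψ‖) * ‖Ψ‖ = ‖Ψ‖^2/2 + C := by
          field_simp
        nlinarith [h2, h3]
    have := hbrc₀ y
    rw [hnc₀]
    rw [hC] at hhalf
    linarith [hhalf]
  -- conjugate bound
  have hconj : intrinsicConj br f c₀ ≤ ((-(h 0) - 1/2 * ‖c₀‖^2 : ℝ) : EReal) := by
    apply iSup_le
    intro y
    rcases ereal_fin_or_top (f y) (hfne y) with ⟨t, hyt⟩ | htop
    · rw [hyt, ← EReal.coe_sub]
      exact EReal.coe_le_coe_iff.2 (hkey y t hyt)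
    · rw [htop, ereal_coe_sub_top]
      exact bot_le
  -- final chain
  have habs := abs_le.1 (abs_qForm_le br hι c₀)
  have L5 : ((-(h 0) - 1/2 * ‖c₀‖^2 : ℝ) : EReal) ≤ ((-(1/2 * ‖c₀‖^2) : ℝ) : EReal) :=
    EReal.coe_le_coe_iff.2 (by linarith)
  have hchain : ((qForm br c₀ : ℝ) : EReal) ≤ ((-(1/2 * ‖c₀‖^2) : ℝ) : EReal) :=
    (hq c₀).trans ((hself c₀).trans (hconj.trans L5))
  have e2 : qForm br c₀ = -(1/2 * ‖c₀‖^2) :=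
    le_antisymm (EReal.coe_le_coe_iff.1 hchain) (by linarith)
  have e1 : f c₀ = ((qForm br c₀ : ℝ) : EReal) := by
    refine le_antisymm ?_ (hq c₀)
    have h6 : f c₀ ≤ ((-(1/2 * ‖c₀‖^2) : ℝ) : EReal) := (hself c₀).trans (hconj.trans L5)
    rwa [← e2] at h6
  exact ⟨c₀, e1, e2⟩

lemma ereal_mul_add_coe (t r : ℝ) (ht : 0 ≤ t) (x : EReal) (hx : x ≠ ⊥) :
    (t : EReal) * (x + (r : EReal)) = (t : EReal) * x + ((t * r : ℝ) : EReal) := by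
  induction x using EReal.rec with
  | bot => exact absurd rfl hx
  | coe s => norm_cast; ring
  | top =>
    rcases eq_or_lt_of_le ht with h0 | hpos
    · rw [← h0]; simp
    · rw [EReal.top_add_coe, EReal.coe_mul_top_of_pos hpos, EReal.top_add_coe]

set_option maxHeartbeats 1000000 in
lemma transLemma (br : B →ₗ[ℝ] B →ₗ[ℝ] ℝ) (hsymm : ∀ b c : B, br b c = br c b)
    (hssdb : IsSSDB br) (f : B → EReal) (hproper : ∃ b, f b ≠ ⊤) (hconv : ConvexFn f)
    (hq : ∀ b, ((qForm br b : ℝ) : EReal) ≤ f b)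
    (hself : ∀ b, f b ≤ intrinsicConj br f b) (w : B) :
    ∃ a : B, f a = ((qForm br a : ℝ) : EReal) ∧
      qForm br (a - w) = -((1/2) * ‖a - w‖^2) := by
  have hfne : ∀ b, f b ≠ ⊥ := fun b => ereal_ne_bot_of_coe_le (hq b)
  set g : B → EReal := fun b => f (b + w) + ((-(br b w) - qForm br w : ℝ) : EReal) with hg
  have hgne : ∀ b, g b ≠ ⊥ := by
    intro b hb
    rcases ereal_fin_or_top (f (b + w)) (hfne (b + w)) with ⟨t, hft⟩ | hft <;>
      rw [hg] at hb <;> simp only [] at hb <;> rw [hft] at hb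
    · rw [← EReal.coe_add] at hb; exact EReal.coe_ne_bot _ hb
    · rw [EReal.top_add_coe] at hb; simp at hb
  have hgproper : ∃ b, g b ≠ ⊤ := by
    obtain ⟨y₀, hy₀⟩ := hproper
    obtain ⟨t, ht⟩ : ∃ t : ℝ, f y₀ = (t : EReal) :=
      ⟨(f y₀).toReal, (EReal.coe_toReal hy₀ (hfne y₀)).symm⟩
    refine ⟨y₀ - w, ?_⟩
    rw [hg]
    simp only []
    rw [sub_add_cancel, ht, ← EReal.coe_add]
    exact EReal.coe_ne_top _
  have hgconv : ConvexFn g := by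
    intro b c t ht0 ht1
    have hpt : (t • b + (1 - t) • c) + w = t • (b + w) + (1 - t) • (c + w) := by module
    have haff : -(br (t • b + (1 - t) • c) w) - qForm br w
        = t * (-(br b w) - qForm br w) + (1 - t) * (-(br c w) - qForm br w) := by
      simp only [map_add, map_smul, LinearMap.add_apply, LinearMap.smul_apply,
        smul_eq_mul]
      ring
    have step1 : g (t • b + (1 - t) • c)
        = f (t • (b + w) + (1 - t) • (c + w))
          + ((t * (-(br b w) - qForm br w) + (1 - t) * (-(br c w) - qForm br w) : ℝ) : EReal) := by
      rw [hg]; simp only []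
      rw [hpt, haff]
    rw [step1]
    have step2 := hconv (b + w) (c + w) t ht0 ht1
    have step3 : f (t • (b + w) + (1 - t) • (c + w))
          + ((t * (-(br b w) - qForm br w) + (1 - t) * (-(br c w) - qForm br w) : ℝ) : EReal)
        ≤ ((t : EReal) * f (b + w) + ((1 - t : ℝ) : EReal) * f (c + w))
          + ((t * (-(br b w) - qForm br w) + (1 - t) * (-(br c w) - qForm br w) : ℝ) : EReal) :=
      add_le_add_left step2 _
    refine step3.trans (le_of_eq ?_)
    rw [EReal.coe_add]
    rw [show (t : EReal) * g b = (t : EReal) * f (b + w)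
        + ((t * (-(br b w) - qForm br w) : ℝ) : EReal) from
      ereal_mul_add_coe t _ ht0 _ (hfne (b + w))]
    rw [show ((1 - t : ℝ) : EReal) * g c = ((1 - t : ℝ) : EReal) * f (c + w)
        + (((1 - t) * (-(br c w) - qForm br w) : ℝ) : EReal) from
      ereal_mul_add_coe (1 - t) _ (by linarith) _ (hfne (c + w))]
    abel
  have hgq : ∀ b, ((qForm br b : ℝ) : EReal) ≤ g b := by
    intro b
    have h1 : qForm br b = qForm br (b + w) + (-(br b w) - qForm br w) := by
      rw [qForm_add br hsymm]; ring
    rw [h1, EReal.coe_add]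
    exact add_le_add_left (hq (b + w)) _
  have hgself : ∀ d, g d ≤ intrinsicConj br g d := by
    intro d
    set K : ℝ := br d w + qForm br w with hK
    have hterm : ∀ b' : B, ((br b' (d + w) : ℝ) : EReal) - f b'
        ≤ intrinsicConj br g d + (K : EReal) := by
      intro b'
      rcases ereal_fin_or_top (f b') (hfne b') with ⟨t, hft⟩ | hft
      · have hgval : g (b' - w) = ((t + (-(br (b' - w) w) - qForm br w) : ℝ) : EReal) := by
          rw [hg]; simp only []
          rw [sub_add_cancel, hft, ← EReal.coe_add]
        have hterm1 : ((br (b' - w) d : ℝ) : EReal) - g (b' - w) ≤ intrinsicConj br g d :=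
          le_iSup (fun b => ((br b d : ℝ) : EReal) - g b) (b' - w)
        rw [hgval, ← EReal.coe_sub] at hterm1
        have hreal : br b' (d + w) - t
            = (br (b' - w) d - (t + (-(br (b' - w) w) - qForm br w))) + K := by
          simp only [map_add, map_sub, LinearMap.sub_apply, hK, qForm]
          rw [hsymm w d]
          ring
        rw [hft, ← EReal.coe_sub, hreal, EReal.coe_add]
        exact add_le_add_left hterm1 _
      · rw [hft, ereal_coe_sub_top]
        exact bot_le
    have h2 : f (d + w) ≤ intrinsicConj br g d + (K : EReal) :=
      (hself (d + w)).trans (iSup_le hterm)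
    have h3 : g d = f (d + w) + ((-K : ℝ) : EReal) := by
      rw [hg]; simp only []
      congr 1
      norm_cast
      rw [hK]; ring
    rw [h3]
    calc f (d + w) + ((-K : ℝ) : EReal)
        ≤ (intrinsicConj br g d + (K : EReal)) + ((-K : ℝ) : EReal) := add_le_add_left h2 _
      _ = intrinsicConj br g d := ereal_add_coe_neg _ K
  obtain ⟨d, hd1, hd2⟩ := mainLemma br hsymm hssdb g hgproper hgconv hgq hgself
  refine ⟨d + w, ?_, ?_⟩
  · have h3 : g d = f (d + w) + ((-(br d w + qForm br w) : ℝ) : EReal) := by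
      rw [hg]; simp only []
      congr 1
      norm_cast
      ring
    have h5 := ereal_add_coe_neg (f (d + w)) (-(br d w + qForm br w))
    rw [neg_neg] at h5
    have h4 : f (d + w) = ((qForm br d + (br d w + qForm br w) : ℝ) : EReal) := by
      rw [← h5, ← h3, hd1, ← EReal.coe_add]
    rw [h4]
    exact congrArg Real.toEReal (by rw [qForm_add br hsymm]; ring)
  · rw [add_sub_cancel_right]
    exact hd2


lemma pq_qpos (br : B →ₗ[ℝ] B →ₗ[ℝ] ℝ) (hsymm : ∀ b c : B, br b c = br c b)
    (f : B → EReal) (hconv : ConvexFn f)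
    (hq : ∀ b, ((qForm br b : ℝ) : EReal) ≤ f b) {b c : B}
    (hb : f b = ((qForm br b : ℝ) : EReal)) (hc : f c = ((qForm br c : ℝ) : EReal)) :
    0 ≤ qForm br (b - c) := by
  have hcv := hconv b c (1/2) (by norm_num) (by norm_num)
  rw [hb, hc] at hcv
  have hpt : (1/2 : ℝ) • b + (1 - (1/2) : ℝ) • c = (1/2 : ℝ) • (b + c) := by module
  rw [hpt] at hcv
  have hcv2 : f ((1/2 : ℝ) • (b + c)) ≤ (((qForm br b + qForm br c)/2 : ℝ) : EReal) := by
    have hcoe : ((1/2 : ℝ) : EReal) * ((qForm br b : ℝ) : EReal)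
        + ((1 - (1/2) : ℝ) : EReal) * ((qForm br c : ℝ) : EReal)
        = (((qForm br b + qForm br c)/2 : ℝ) : EReal) := by norm_cast; ring
    rw [hcoe] at hcv
    exact hcv
  have h1 : qForm br ((1/2 : ℝ) • (b + c)) ≤ (qForm br b + qForm br c)/2 := by
    have := (hq _).trans hcv2
    exact_mod_cast this
  rw [qForm_smul, qForm_add br hsymm] at h1
  rw [qForm_sub br hsymm]
  nlinarith [h1]

lemma conj_le_on_pq (br : B →ₗ[ℝ] B →ₗ[ℝ] ℝ) (hsymm : ∀ b c : B, br b c = br c b)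
    (f : B → EReal) (hconv : ConvexFn f)
    (hq : ∀ b, ((qForm br b : ℝ) : EReal) ≤ f b) {b : B}
    (hb : f b = ((qForm br b : ℝ) : EReal)) :
    intrinsicConj br f b ≤ ((qForm br b : ℝ) : EReal) := by
  have hfne : ∀ y, f y ≠ ⊥ := fun y => ereal_ne_bot_of_coe_le (hq y)
  apply iSup_le
  intro c
  rcases ereal_fin_or_top (f c) (hfne c) with ⟨tc, hfc⟩ | hfc
  swap
  · rw [hfc, ereal_coe_sub_top]; exact bot_le
  rw [hfc, ← EReal.coe_sub]
  refine EReal.coe_le_coe_iff.2 ?_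
  -- key family of inequalities
  have key : ∀ t : ℝ, 0 < t → t ≤ 1 →
      qForm br b + br b (c - b) + t * qForm br (c - b) ≤ tc := by
    intro t ht0 ht1
    have hcv := hconv c b t (le_of_lt ht0) ht1
    rw [hfc, hb] at hcv
    have hcoe : (t : EReal) * ((tc : ℝ) : EReal)
        + ((1 - t : ℝ) : EReal) * ((qForm br b : ℝ) : EReal)
        = ((t * tc + (1 - t) * qForm br b : ℝ) : EReal) := by norm_cast
    rw [hcoe] at hcv
    have hpt : t • c + (1 - t) • b = b + t • (c - b) := by module
    rw [hpt] at hcv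
    have h1 : qForm br (b + t • (c - b)) ≤ t * tc + (1 - t) * qForm br b := by
      have := (hq _).trans hcv
      exact_mod_cast this
    rw [qForm_add br hsymm, map_smul, smul_eq_mul, qForm_smul] at h1
    have h2 : t * (qForm br b + br b (c - b) + t * qForm br (c - b)) ≤ t * tc := by
      nlinarith [h1]
    exact le_of_mul_le_mul_left h2 ht0
  have hA : qForm br b + br b (c - b) ≤ tc := by
    set A := qForm br b + br b (c - b) with hAdef
    set Y := qForm br (c - b) with hY
    rcases le_or_gt 0 Y with hY0 | hY0
    · have := key 1 one_pos le_rfl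
      linarith
    · by_contra hcon
      push_neg at hcon
      set t := min 1 ((A - tc)/(-2 * Y)) with ht
      have ht0 : 0 < t := lt_min one_pos (div_pos (by linarith) (by linarith))
      have ht1 : t ≤ 1 := min_le_left _ _
      have hk := key t ht0 ht1
      have ht2 : t ≤ (A - tc)/(-2 * Y) := min_le_right _ _
      have ht3 : t * (-2 * Y) ≤ A - tc := by
        rw [← le_div_iff₀ (by linarith : (0:ℝ) < -2 * Y)]
        exact ht2
      linarith
  have hbb : br b b = 2 * qForm br b := by rw [qForm]; ring
  have hcb : br b (c - b) = br b c - br b b := map_sub (br b) c b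
  rw [hsymm c b]
  rw [hcb, hbb] at hA
  linarith


-- membership in A from q-relatedness, for maximal A
lemma q_related_mem (br : B →ₗ[ℝ] B →ₗ[ℝ] ℝ) (hsymm : ∀ b c : B, br b c = br c b)
    {A : Set B} (hmax : MaxQPos br A) {b : B}
    (hb : ∀ a ∈ A, 0 ≤ qForm br (b - a)) : b ∈ A := by
  have hqp : QPos br (insert b A) := by
    refine ⟨⟨b, Set.mem_insert b A⟩, ?_⟩
    intro x hx y hy
    rcases Set.mem_insert_iff.1 hx with rfl | hxA <;>
      rcases Set.mem_insert_iff.1 hy with rfl | hyA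
    · rw [sub_self, qForm_zero]
    · exact hb y hyA
    · rw [← neg_sub, qForm_neg]; exact hb x hxA
    · exact hmax.1.2 x hxA y hyA
  have := hmax.2 (insert b A) hqp (Set.subset_insert b A)
  rw [← this]
  exact Set.mem_insert b A


/-- in an SSDB space, with `g₀ := ½‖·‖²`:
(a) if `f ∈ PC(B)` is a BC-function then `P_q(f)` is maximally q-positive and
`P_q(f^@) = P_q(f)`;
(b) a q-positive subset `A` of `B` is maximally q-positive iff `A - N_q(g₀) = B`. -/
theorem stmt9 [CompleteSpace B] [Nontrivial B]
    (br : B →ₗ[ℝ] B →ₗ[ℝ] ℝ) (hsymm : ∀ b c : B, br b c = br c b)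
    (hssdb : IsSSDB br)
    (g₀ : B → EReal) (hg₀ : ∀ b : B, g₀ b = (((1 / 2) * ‖b‖ ^ 2 : ℝ) : EReal)) :
    (∀ f : B → EReal, ProperFn f → ConvexFn f → IsBC br f →
      MaxQPos br (Pq br f) ∧ Pq br (intrinsicConj br f) = Pq br f) ∧
    (∀ A : Set B, QPos br A →
      (MaxQPos br A ↔ A - Nq br g₀ = (Set.univ : Set B))) := by
  constructor
  · -- part (a)
    intro f hpf hcf hbc
    have hq : ∀ b, ((qForm br b : ℝ) : EReal) ≤ f b := fun b => (hbc b).1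
    have hself : ∀ b, f b ≤ intrinsicConj br f b := fun b => (hbc b).2
    obtain ⟨c₀, hc₀, -⟩ := mainLemma br hsymm hssdb f hpf.2 hcf hq hself
    have hQP : QPos br (Pq br f) :=
      ⟨⟨c₀, hc₀⟩, fun b hb c hc => pq_qpos br hsymm f hcf hq hb hc⟩
    have hmax : ∀ C : Set B, QPos br C → Pq br f ⊆ C → C = Pq br f := by
      intro C hC hsub
      refine Set.Subset.antisymm ?_ hsub
      intro c hc
      obtain ⟨a, ha1, ha2⟩ := transLemma br hsymm hssdb f hpf.2 hcf hq hself c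
      have haPq : a ∈ Pq br f := ha1
      have hrel : 0 ≤ qForm br (c - a) := hC.2 c hc a (hsub haPq)
      have hflip : qForm br (c - a) = -((1/2) * ‖a - c‖^2) := by
        rw [← neg_sub a c, qForm_neg]
        exact ha2
      have h0 : ‖a - c‖^2 = 0 := by nlinarith [hrel, hflip, sq_nonneg ‖a - c‖]
      have hac : a = c := by
        have := (pow_eq_zero_iff (two_ne_zero)).1 h0
        have := norm_eq_zero.1 this
        exact sub_eq_zero.1 this
      rw [← hac]
      exact haPq
    refine ⟨⟨hQP, hmax⟩, ?_⟩
    ext b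
    simp only [Pq, Set.mem_setOf_eq]
    constructor
    · intro hb
      exact le_antisymm ((hself b).trans hb.le) (hq b)
    · intro hb
      refine le_antisymm (conj_le_on_pq br hsymm f hcf hq hb) ?_
      rw [← hb]
      exact hself b
  · -- part (b)
    intro A hA
    constructor
    · intro hmax
      apply Set.eq_univ_of_forall
      intro w
      haveI : Nonempty A := hA.1.to_subtype
      obtain ⟨a₀, ha₀⟩ := hA.1
      set Φ : B → EReal := fun b => ⨆ a : A, ((br b a - qForm br a : ℝ) : EReal) with hΦ
      have hΦmem : ∀ (b : B) (a : B) (ha : a ∈ A),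
          ((br b a - qForm br a : ℝ) : EReal) ≤ Φ b := by
        intro b a ha
        exact le_iSup (fun a : A => ((br b a - qForm br a : ℝ) : EReal)) ⟨a, ha⟩
      have hΦa : ∀ a ∈ A, Φ a = ((qForm br a : ℝ) : EReal) := by
        intro a ha
        refine le_antisymm ?_ ?_
        · apply iSup_le
          rintro ⟨a', ha'⟩
          refine EReal.coe_le_coe_iff.2 ?_
          have := hmax.1.2 a ha a' ha'
          rw [qForm_sub br hsymm] at this
          simp only []
          linarith
        · have h1 := hΦmem a a ha
          have h2 : br a a - qForm br a = qForm br a := by rw [qForm]; ring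
          rwa [h2] at h1
      have hΦproper : ∃ b, Φ b ≠ ⊤ := by
        refine ⟨a₀, ?_⟩
        rw [hΦa a₀ ha₀]
        exact EReal.coe_ne_top _
      have hΦq : ∀ b, ((qForm br b : ℝ) : EReal) ≤ Φ b := by
        intro b
        by_contra hlt
        push_neg at hlt
        have hb : ∀ a ∈ A, 0 ≤ qForm br (b - a) := by
          intro a ha
          have h1 := (hΦmem b a ha).trans_lt hlt
          have h2 : br b a - qForm br a < qForm br b := by exact_mod_cast h1
          rw [qForm_sub br hsymm]
          linarith
        have hbA := q_related_mem br hsymm hmax hb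
        have h3 := hΦmem b b hbA
        have h4 : br b b - qForm br b = qForm br b := by rw [qForm]; ring
        rw [h4] at h3
        exact absurd (h3.trans_lt hlt) (lt_irrefl _)
      have hΦconv : ConvexFn Φ := by
        intro b c t ht0 ht1
        apply iSup_le
        rintro ⟨a, ha⟩
        have hlin : br (t • b + (1 - t) • c) a - qForm br a
            = t * (br b a - qForm br a) + (1 - t) * (br c a - qForm br a) := by
          simp only [map_add, map_smul, LinearMap.add_apply, LinearMap.smul_apply,
            smul_eq_mul]
          ring
        rw [hlin, EReal.coe_add, EReal.coe_mul, EReal.coe_mul]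
        refine add_le_add ?_ ?_
        · exact mul_le_mul_of_nonneg_left (hΦmem b a ha) (by exact_mod_cast ht0)
        · exact mul_le_mul_of_nonneg_left (hΦmem c a ha) (by exact_mod_cast (by linarith : (0:ℝ) ≤ 1 - t))
      have hΦself : ∀ b, Φ b ≤ intrinsicConj br Φ b := by
        intro b
        apply iSup_le
        rintro ⟨a, ha⟩
        have h1 : ((br a b : ℝ) : EReal) - Φ a = ((br a b - qForm br a : ℝ) : EReal) := by
          rw [hΦa a ha, ← EReal.coe_sub]
        have h2 : ((br b a - qForm br a : ℝ) : EReal) ≤ intrinsicConj br Φ b := by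
          rw [hsymm b a, ← h1]
          exact le_iSup (fun y => ((br y b : ℝ) : EReal) - Φ y) a
        exact h2
      obtain ⟨a, ha1, ha2⟩ := transLemma br hsymm hssdb Φ hΦproper hΦconv hΦq hΦself w
      have haA : a ∈ A := by
        refine q_related_mem br hsymm hmax ?_
        intro a' ha'
        have h1 : ((br a a' - qForm br a' : ℝ) : EReal) ≤ ((qForm br a : ℝ) : EReal) := by
          rw [← ha1]
          exact hΦmem a a' ha'
        have h2 : br a a' - qForm br a' ≤ qForm br a := by exact_mod_cast h1
        rw [qForm_sub br hsymm]
        linarith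
      have hnmem : a - w ∈ Nq br g₀ := by
        show g₀ (a - w) = ((-(qForm br (a - w)) : ℝ) : EReal)
        rw [hg₀ (a - w)]
        exact congrArg Real.toEReal (by rw [ha2]; ring)
      exact Set.mem_sub.2 ⟨a, haA, a - w, hnmem, by abel⟩
    · intro heq
      refine ⟨hA, ?_⟩
      intro C hC hsub
      refine Set.Subset.antisymm ?_ hsub
      intro c hc
      have hcu : c ∈ A - Nq br g₀ := by rw [heq]; trivial
      obtain ⟨a, haA, n, hn, hanc⟩ := Set.mem_sub.1 hcu
      have hng : (1/2 : ℝ) * ‖n‖^2 = -(qForm br n) := by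
        have h1 : g₀ n = ((-(qForm br n) : ℝ) : EReal) := hn
        rw [hg₀ n] at h1
        exact_mod_cast h1
      have hrel : 0 ≤ qForm br (c - a) := hC.2 c hc a (hsub haA)
      have hca : c - a = -n := by rw [← hanc]; abel
      rw [hca, qForm_neg] at hrel
      have h0 : ‖n‖^2 = 0 := by nlinarith [hrel, hng, sq_nonneg ‖n‖]
      have hn0 : n = 0 := norm_eq_zero.1 ((pow_eq_zero_iff (two_ne_zero)).1 h0)
      rw [← hanc, hn0, sub_zero]
      exact haA
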